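/- Let A, B, C be three affinely independent points in the Euclidean plane. If there exist three affinely independent (non-collinear) points P₁, P₂, P₃ in the convex hull of {A, B, C} at which the distance sum function V takes the same value (V(P₁) = V(P₂) = V(P₃)), then the triangle is equilateral: dist A B = dist B C = dist C A. -/

import Mathlib

noncomputable section

/-- The point `(x, y)` of the Euclidean plane `ℝ²`. -/
def pt (x y : ℝ) : EuclideanSpace ℝ (Fin 2) :=
  (WithLp.equiv 2 (Fin 2 → ℝ)).symm ![x, y]

/-- The line through `X` and `Y`, i.e. the affine span of `{X, Y}`, as a set. -/
def lineThrough (X Y : EuclideanSpace ℝ (Fin 2)) : Set (EuclideanSpace ℝ (Fin 2)) :=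
  (affineSpan ℝ {X, Y} : AffineSubspace ℝ (EuclideanSpace ℝ (Fin 2)))

/-- The distance sum function of the triangle `ABC`:
`V(P) = dist(P, line BC) + dist(P, line CA) + dist(P, line AB)`. -/
def vSum (A B C P : EuclideanSpace ℝ (Fin 2)) : ℝ :=
  Metric.infDist P (lineThrough B C) + Metric.infDist P (lineThrough C A) +
    Metric.infDist P (lineThrough A B)

/-- The squared-distance sum function of the triangle `ABC`:
`W(P) = dist(P, line BC)² + dist(P, line CA)² + dist(P, line AB)²`. -/
def wSum (A B C P : EuclideanSpace ℝ (Fin 2)) : ℝ :=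
  Metric.infDist P (lineThrough B C) ^ 2 + Metric.infDist P (lineThrough C A) ^ 2 +
    Metric.infDist P (lineThrough A B) ^ 2

namespace StmtHelper

abbrev E2 := EuclideanSpace ℝ (Fin 2)

def cr (u v : E2) : ℝ := u 0 * v 1 - u 1 * v 0

lemma sub_apply (u v : E2) (i : Fin 2) : (u - v) i = u i - v i := rfl
lemma add_apply (u v : E2) (i : Fin 2) : (u + v) i = u i + v i := rfl
lemma smul_apply (a : ℝ) (v : E2) (i : Fin 2) : (a • v) i = a * v i := rfl

lemma norm_sq' (u : E2) : ‖u‖ ^ 2 = u 0 ^ 2 + u 1 ^ 2 := by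
  rw [EuclideanSpace.norm_eq, Real.sq_sqrt (by positivity)]
  simp [Fin.sum_univ_two]

lemma lagrange (u v : E2) :
    ‖u‖ ^ 2 * ‖v‖ ^ 2 = cr u v ^ 2 + (u 0 * v 0 + u 1 * v 1) ^ 2 := by
  rw [norm_sq', norm_sq', cr]; ring

lemma abs_cr_le (u v : E2) : |cr u v| ≤ ‖u‖ * ‖v‖ := by
  nlinarith [lagrange u v, abs_nonneg (cr u v), norm_nonneg u, norm_nonneg v,
    sq_abs (cr u v), sq_nonneg (u 0 * v 0 + u 1 * v 1),
    mul_nonneg (norm_nonneg u) (norm_nonneg v)]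

lemma mem_lineThrough {B C Q : E2} :
    Q ∈ lineThrough B C ↔ ∃ t : ℝ, Q - B = t • (C - B) := by
  have h2 : ∀ v : E2, v +ᵥ B ∈ lineThrough B C ↔ ∃ t : ℝ, t • (C - B) = v := by
    intro v
    rw [lineThrough, SetLike.mem_coe, vadd_left_mem_affineSpan_pair]
    simp [vsub_eq_sub]
  constructor
  · intro hQ
    obtain ⟨t, ht⟩ := (h2 (Q - B)).1 (by simpa [vadd_eq_add, sub_add_cancel] using hQ)
    exact ⟨t, ht.symm⟩
  · rintro ⟨t, ht⟩
    have := (h2 (Q - B)).2 ⟨t, ht.symm⟩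
    simpa [vadd_eq_add, sub_add_cancel] using this

lemma infDist_line (B C P : E2) (h : B ≠ C) :
    Metric.infDist P (lineThrough B C) = |cr (C - B) (P - B)| / dist B C := by
  have hu0 : C - B ≠ 0 := sub_ne_zero.mpr (Ne.symm h)
  have hu : (0:ℝ) < ‖C - B‖ := norm_pos_iff.mpr hu0
  have hd : dist B C = ‖C - B‖ := by rw [dist_eq_norm, ← norm_neg]; congr 1; abel
  have hn2 : ‖C - B‖ ^ 2 = (C - B) 0 ^ 2 + (C - B) 1 ^ 2 := norm_sq' _
  have hn2pos : (0:ℝ) < (C - B) 0 ^ 2 + (C - B) 1 ^ 2 := by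
    rw [← hn2]; positivity
  apply le_antisymm
  · -- pick the foot of perpendicular
    set t : ℝ := ((P - B) 0 * (C - B) 0 + (P - B) 1 * (C - B) 1) /
      ((C - B) 0 ^ 2 + (C - B) 1 ^ 2) with ht
    have hQmem : B + t • (C - B) ∈ lineThrough B C :=
      mem_lineThrough.2 ⟨t, by abel⟩
    refine le_trans (Metric.infDist_le_dist_of_mem hQmem) ?_
    rw [dist_eq_norm, hd]
    set w : E2 := P - (B + t • (C - B)) with hw
    have hperp : w 0 * (C - B) 0 + w 1 * (C - B) 1 = 0 := by
      have hw0 : w 0 = (P - B) 0 - t * (C - B) 0 := by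
        simp [hw, sub_apply, add_apply, smul_apply]; ring
      have hw1 : w 1 = (P - B) 1 - t * (C - B) 1 := by
        simp [hw, sub_apply, add_apply, smul_apply]; ring
      have hden : ((C:E2) - B) 0 ^ 2 + ((C:E2) - B) 1 ^ 2 ≠ 0 := hn2pos.ne'
      simp only [sub_apply] at hden
      rw [hw0, hw1, ht]
      simp only [sub_apply]
      field_simp
      ring
    have hcrw : cr (C - B) w = cr (C - B) (P - B) := by
      have hw0 : w 0 = (P - B) 0 - t * (C - B) 0 := by
        simp [hw, sub_apply, add_apply, smul_apply]; ring
      have hw1 : w 1 = (P - B) 1 - t * (C - B) 1 := by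
        simp [hw, sub_apply, add_apply, smul_apply]; ring
      rw [cr, cr, hw0, hw1]; ring
    have hkey : ‖w‖ ^ 2 * ‖C - B‖ ^ 2 = cr (C - B) (P - B) ^ 2 := by
      have := lagrange (C - B) w
      have hperp' : (C - B) 0 * w 0 + (C - B) 1 * w 1 = 0 := by linarith [hperp]
      rw [hperp'] at this
      rw [← hcrw]
      nlinarith [this]
    have : ‖w‖ = |cr (C - B) (P - B)| / ‖C - B‖ := by
      rw [eq_div_iff (ne_of_gt hu)]
      have h1 : (‖w‖ * ‖C - B‖) ^ 2 = |cr (C - B) (P - B)| ^ 2 := by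
        rw [sq_abs]; nlinarith [hkey]
      exact (pow_left_inj₀ (by positivity) (abs_nonneg _) (two_ne_zero)).1 h1
    rw [this]
  · rw [Metric.infDist_eq_iInf]
    have hne : Nonempty (lineThrough B C) := ⟨B, mem_lineThrough.2 ⟨0, by simp⟩⟩
    apply le_ciInf
    rintro ⟨Q, hQ⟩
    obtain ⟨s, hs⟩ := mem_lineThrough.1 hQ
    have hs0 : Q 0 - B 0 = s * (C 0 - B 0) := congrArg (fun v : E2 => v 0) hs
    have hs1 : Q 1 - B 1 = s * (C 1 - B 1) := congrArg (fun v : E2 => v 1) hs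
    have hcr : cr (C - B) (P - B) = cr (C - B) (P - Q) := by
      simp only [cr, sub_apply]
      linear_combination (C 0 - B 0) * hs1 - (C 1 - B 1) * hs0
    show |cr (C - B) (P - B)| / dist B C ≤ dist P Q
    rw [hd, dist_eq_norm, div_le_iff₀ hu, hcr]
    calc |cr (C - B) (P - Q)| ≤ ‖C - B‖ * ‖P - Q‖ := abs_cr_le _ _
      _ = ‖P - Q‖ * ‖C - B‖ := mul_comm _ _

end StmtHelper

namespace StmtHelper

lemma ext2 {u v : E2} (h0 : u 0 = v 0) (h1 : u 1 = v 1) : u = v := by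
  ext i
  fin_cases i <;> assumption

lemma solve_dep {y0 y1 z0 z1 : ℝ} (h : y0 * z1 - y1 * z0 = 0)
    (hz : ¬(z0 = 0 ∧ z1 = 0)) : ∃ r : ℝ, y0 = r * z0 ∧ y1 = r * z1 := by
  by_cases h0 : z0 = 0
  · have h1 : z1 ≠ 0 := fun hh => hz ⟨h0, hh⟩
    have hy0 : y0 = 0 := by
      have hm : y0 * z1 = 0 := by rw [h0] at h; linarith
      rcases mul_eq_zero.1 hm with hh | hh
      · exact hh
      · exact absurd hh h1
    exact ⟨y1 / z1, by rw [hy0, h0]; ring, by field_simp⟩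
  · refine ⟨y0 / z0, by field_simp, ?_⟩
    field_simp
    linear_combination -h

lemma collinear_of_cr_eq_zero {X Y Z : E2} (h : cr (Y - X) (Z - X) = 0) :
    Collinear ℝ ({X, Y, Z} : Set E2) := by
  have hmem : X ∈ ({X, Y, Z} : Set E2) := by simp
  rw [collinear_iff_of_mem hmem]
  by_cases hv : Z - X = 0
  · have hZX : Z = X := by rwa [sub_eq_zero] at hv
    refine ⟨Y - X, fun p hp => ?_⟩
    have hX : ∃ r : ℝ, X = r • ((Y:E2) - X) +ᵥ X := ⟨0, by simp⟩
    have hY : ∃ r : ℝ, Y = r • ((Y:E2) - X) +ᵥ X := ⟨1, by rw [vadd_eq_add, one_smul]; abel⟩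
    rcases hp with rfl | rfl | rfl
    · exact hX
    · exact hY
    · rw [hZX]; exact hX
  · refine ⟨Z - X, fun p hp => ?_⟩
    have hX : ∃ r : ℝ, X = r • ((Z:E2) - X) +ᵥ X := ⟨0, by simp⟩
    have hZ : ∃ r : ℝ, Z = r • ((Z:E2) - X) +ᵥ X := ⟨1, by rw [vadd_eq_add, one_smul]; abel⟩
    have hY : ∃ r : ℝ, Y = r • ((Z:E2) - X) +ᵥ X := by
      have hz : ¬((Z 0 - X 0) = 0 ∧ (Z 1 - X 1) = 0) := by
        rintro ⟨h0, h1⟩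
        exact hv (ext2 (by simpa [sub_apply] using h0) (by simpa [sub_apply] using h1))
      have h' : (Y 0 - X 0) * (Z 1 - X 1) - (Y 1 - X 1) * (Z 0 - X 0) = 0 := by
        simpa [cr, sub_apply] using h
      obtain ⟨r, hr0, hr1⟩ := solve_dep h' hz
      refine ⟨r, ext2 ?_ ?_⟩
      · simp only [vadd_eq_add, add_apply, smul_apply, sub_apply]; linarith
      · simp only [vadd_eq_add, add_apply, smul_apply, sub_apply]; linarith
    rcases hp with rfl | rfl | rfl
    · exact hX
    · exact hY
    · exact hZ

lemma range_triple (X Y Z : E2) : Set.range ![X, Y, Z] = ({X, Y, Z} : Set E2) := by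
  ext p
  simp only [Set.mem_range, Set.mem_insert_iff, Set.mem_singleton_iff]
  constructor
  · rintro ⟨i, rfl⟩
    fin_cases i <;> simp
  · rintro (rfl | rfl | rfl)
    exacts [⟨0, rfl⟩, ⟨1, rfl⟩, ⟨2, rfl⟩]

lemma cr_ne_zero {X Y Z : E2} (h : AffineIndependent ℝ ![X, Y, Z]) :
    cr (Y - X) (Z - X) ≠ 0 := by
  intro hcr
  rw [affineIndependent_iff_not_collinear] at h
  exact h (by rw [range_triple]; exact collinear_of_cr_eq_zero hcr)

lemma hull_bary {A B C P : E2} (hP : P ∈ convexHull ℝ ({A, B, C} : Set E2)) :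
    ∃ α β γ : ℝ, 0 ≤ α ∧ 0 ≤ β ∧ 0 ≤ γ ∧ α + β + γ = 1 ∧
      P = α • A + β • B + γ • C := by
  have h1 : ({A, B, C} : Set E2) = insert A {B, C} := rfl
  rw [h1, convexHull_insert ⟨B, by simp⟩, convexHull_pair] at hP
  rw [mem_convexJoin] at hP
  obtain ⟨x, hx, z, hz, hPz⟩ := hP
  rw [Set.mem_singleton_iff] at hx
  subst hx
  rw [segment_eq_image₂] at hz hPz
  obtain ⟨⟨a', b'⟩, ⟨ha', hb', hab'⟩, rfl⟩ := hz
  obtain ⟨⟨a, b⟩, ⟨ha, hb, hab⟩, rfl⟩ := hPz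
  refine ⟨a, b * a', b * b', ha, mul_nonneg hb ha', mul_nonneg hb hb', by nlinarith, ?_⟩
  simp only [smul_add, smul_smul, add_assoc]

end StmtHelper

namespace StmtHelper

lemma cr1 {A B C P : E2} {a b g : ℝ} (hsum : a + b + g = 1)
    (hP : P = a • A + b • B + g • C) :
    cr (C - B) (P - B) = a * cr (C - B) (A - B) := by
  have hb : b = 1 - a - g := by linarith
  subst hb hP
  simp only [cr, sub_apply, add_apply, smul_apply]
  ring

lemma cr2 {A B C P : E2} {a b g : ℝ} (hsum : a + b + g = 1)
    (hP : P = a • A + b • B + g • C) :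
    cr (A - C) (P - C) = b * cr (C - B) (A - B) := by
  have hg : g = 1 - a - b := by linarith
  subst hg hP
  simp only [cr, sub_apply, add_apply, smul_apply]
  ring

lemma cr3 {A B C P : E2} {a b g : ℝ} (hsum : a + b + g = 1)
    (hP : P = a • A + b • B + g • C) :
    cr (B - A) (P - A) = g * cr (C - B) (A - B) := by
  have ha : a = 1 - b - g := by linarith
  subst ha hP
  simp only [cr, sub_apply, add_apply, smul_apply]
  ring

lemma vSum_eq {A B C : E2} (hAB : A ≠ B) (hBC : B ≠ C) (hCA : C ≠ A)
    {P : E2} {a b g : ℝ} (ha : 0 ≤ a) (hb : 0 ≤ b) (hg : 0 ≤ g)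
    (hsum : a + b + g = 1) (hP : P = a • A + b • B + g • C) :
    vSum A B C P =
      |cr (C - B) (A - B)| * (a / dist B C + b / dist C A + g / dist A B) := by
  rw [vSum, infDist_line B C P hBC, infDist_line C A P hCA, infDist_line A B P hAB,
    cr1 hsum hP, cr2 hsum hP, cr3 hsum hP, abs_mul, abs_mul, abs_mul,
    abs_of_nonneg ha, abs_of_nonneg hb, abs_of_nonneg hg]
  ring

end StmtHelper

/-- If the distance sum function takes the same value at three non-collinear points of the
triangle, then the triangle is equilateral. -/
theorem stmt_2 (A B C P₁ P₂ P₃ : EuclideanSpace ℝ (Fin 2))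
    (hind : AffineIndependent ℝ ![A, B, C])
    (hPind : AffineIndependent ℝ ![P₁, P₂, P₃])
    (hP₁ : P₁ ∈ convexHull ℝ ({A, B, C} : Set (EuclideanSpace ℝ (Fin 2))))
    (hP₂ : P₂ ∈ convexHull ℝ ({A, B, C} : Set (EuclideanSpace ℝ (Fin 2))))
    (hP₃ : P₃ ∈ convexHull ℝ ({A, B, C} : Set (EuclideanSpace ℝ (Fin 2))))
    (h₁₂ : vSum A B C P₁ = vSum A B C P₂) (h₂₃ : vSum A B C P₂ = vSum A B C P₃) :
    dist A B = dist B C ∧ dist B C = dist C A := by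
  classical
  open StmtHelper in
  have hAB : A ≠ B := by
    intro h
    have h01 : (0 : Fin 3) = 1 := hind.injective (by simpa using h)
    exact absurd h01 (by decide)
  have hBC : B ≠ C := by
    intro h
    have h12 : (1 : Fin 3) = 2 := hind.injective (by simpa using h)
    exact absurd h12 (by decide)
  have hCA : C ≠ A := by
    intro h
    have h20 : (2 : Fin 3) = 0 := hind.injective (by simpa using h)
    exact absurd h20 (by decide)
  set a := dist B C with hadef
  set b := dist C A with hbdef
  set c := dist A B with hcdef
  have hapos : 0 < a := dist_pos.2 hBC
  have hbpos : 0 < b := dist_pos.2 hCA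
  have hcpos : 0 < c := dist_pos.2 hAB
  set T := StmtHelper.cr (C - B) (A - B) with hTdef
  have hTne : T ≠ 0 := by
    intro h0
    apply StmtHelper.cr_ne_zero hind
    have hEq : StmtHelper.cr (B - A) (C - A) = T := by
      simp only [hTdef, StmtHelper.cr, StmtHelper.sub_apply]
      ring
    rw [hEq, h0]
  have habs : |T| ≠ 0 := abs_ne_zero.2 hTne
  obtain ⟨a₁, b₁, g₁, ha₁, hb₁, hg₁, hs₁, hp₁⟩ := StmtHelper.hull_bary hP₁
  obtain ⟨a₂, b₂, g₂, ha₂, hb₂, hg₂, hs₂, hp₂⟩ := StmtHelper.hull_bary hP₂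
  obtain ⟨a₃, b₃, g₃, ha₃, hb₃, hg₃, hs₃, hp₃⟩ := StmtHelper.hull_bary hP₃
  have hv₁ := StmtHelper.vSum_eq hAB hBC hCA ha₁ hb₁ hg₁ hs₁ hp₁
  have hv₂ := StmtHelper.vSum_eq hAB hBC hCA ha₂ hb₂ hg₂ hs₂ hp₂
  have hv₃ := StmtHelper.vSum_eq hAB hBC hCA ha₃ hb₃ hg₃ hs₃ hp₃
  have hS₁₂ : a₁ / a + b₁ / b + g₁ / c = a₂ / a + b₂ / b + g₂ / c := by
    apply mul_left_cancel₀ habs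
    rw [← hv₁, ← hv₂]
    exact h₁₂
  have hS₂₃ : a₂ / a + b₂ / b + g₂ / c = a₃ / a + b₃ / b + g₃ / c := by
    apply mul_left_cancel₀ habs
    rw [← hv₂, ← hv₃]
    exact h₂₃
  -- the affine function f
  set f : StmtHelper.E2 → ℝ := fun P =>
    StmtHelper.cr (C - B) (P - B) / a + StmtHelper.cr (A - C) (P - C) / b +
      StmtHelper.cr (B - A) (P - A) / c with hfdef
  have hf : ∀ (P : StmtHelper.E2) (x y z : ℝ), x + y + z = 1 →
      P = x • A + y • B + z • C → f P = (x / a + y / b + z / c) * T := by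
    intro P x y z hsum hP
    simp only [hfdef]
    rw [StmtHelper.cr1 hsum hP, StmtHelper.cr2 hsum hP, StmtHelper.cr3 hsum hP]
    simp only [← hTdef]
    ring
  set k₁ : ℝ := -((C 1 - B 1) / a + (A 1 - C 1) / b + (B 1 - A 1) / c) with hk₁def
  set k₂ : ℝ := (C 0 - B 0) / a + (A 0 - C 0) / b + (B 0 - A 0) / c with hk₂def
  have hfd : ∀ P Q : StmtHelper.E2,
      f P - f Q = k₁ * (P 0 - Q 0) + k₂ * (P 1 - Q 1) := by
    intro P Q
    simp only [hfdef, hk₁def, hk₂def, StmtHelper.cr, StmtHelper.sub_apply]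
    field_simp
    ring
  have hf₁ := hf P₁ a₁ b₁ g₁ hs₁ hp₁
  have hf₂ := hf P₂ a₂ b₂ g₂ hs₂ hp₂
  have hf₃ := hf P₃ a₃ b₃ g₃ hs₃ hp₃
  have hf₁₂ : f P₁ = f P₂ := by rw [hf₁, hf₂, hS₁₂]
  have hf₂₃ : f P₂ = f P₃ := by rw [hf₂, hf₃, hS₂₃]
  have e12 : k₁ * (P₂ 0 - P₁ 0) + k₂ * (P₂ 1 - P₁ 1) = 0 := by
    rw [← hfd P₂ P₁, ← hf₁₂, sub_self]
  have e13 : k₁ * (P₃ 0 - P₁ 0) + k₂ * (P₃ 1 - P₁ 1) = 0 := by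
    rw [← hfd P₃ P₁]
    rw [show f P₃ = f P₁ from (hf₁₂.trans hf₂₃).symm]
    exact sub_self _
  have hD : (P₂ 0 - P₁ 0) * (P₃ 1 - P₁ 1) - (P₂ 1 - P₁ 1) * (P₃ 0 - P₁ 0) ≠ 0 := by
    have := StmtHelper.cr_ne_zero hPind
    simpa [StmtHelper.cr, StmtHelper.sub_apply] using this
  have hk₁ : k₁ = 0 := by
    have h0 : k₁ * ((P₂ 0 - P₁ 0) * (P₃ 1 - P₁ 1) - (P₂ 1 - P₁ 1) * (P₃ 0 - P₁ 0)) = 0 := by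
      linear_combination (P₃ 1 - P₁ 1) * e12 - (P₂ 1 - P₁ 1) * e13
    rcases mul_eq_zero.1 h0 with h | h
    · exact h
    · exact absurd h hD
  have hk₂ : k₂ = 0 := by
    have h0 : k₂ * ((P₂ 0 - P₁ 0) * (P₃ 1 - P₁ 1) - (P₂ 1 - P₁ 1) * (P₃ 0 - P₁ 0)) = 0 := by
      linear_combination (P₂ 0 - P₁ 0) * e13 - (P₃ 0 - P₁ 0) * e12
    rcases mul_eq_zero.1 h0 with h | h
    · exact h
    · exact absurd h hD
  have hconst : ∀ P Q : StmtHelper.E2, f P = f Q := by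
    intro P Q
    have := hfd P Q
    rw [hk₁, hk₂] at this
    simp at this
    linarith
  have hfA : f A = (1 / a + 0 / b + 0 / c) * T :=
    hf A 1 0 0 (by ring) (by simp)
  have hfB : f B = (0 / a + 1 / b + 0 / c) * T :=
    hf B 0 1 0 (by ring) (by simp)
  have hfC : f C = (0 / a + 0 / b + 1 / c) * T :=
    hf C 0 0 1 (by ring) (by simp)
  have hab' : a = b := by
    have h := hconst A B
    rw [hfA, hfB] at h
    field_simp at h
    exact mul_right_cancel₀ hcpos.ne' (by linear_combination -h)
  have hbc' : b = c := by
    have h := hconst B C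
    rw [hfB, hfC] at h
    field_simp at h
    exact mul_left_cancel₀ hapos.ne' (by linear_combination -h)
  exact ⟨by rw [hcdef, hadef] at *; linarith, by rw [hadef, hbdef] at *; linarith⟩
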